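/- There exists an absolute constant C such that for every digraph G on n ≥ 2 vertices and every integer t with 1 ≤ t ≤ n, there exists a set F of shortcut edges of G with |F| ≤ C·t²·(log n)² such that the diameter of the digraph obtained from G by adding the edges of F is at most C·n/t. -/
import Mathlib


/-- `HasPath E n u v` : there is a directed path with exactly `n` edges from
`u` to `v` in the digraph with edge relation `E`. -/
def HasPath {V : Type} (E : V → V → Prop) : ℕ → V → V → Prop
  | 0, u, v => u = v
  | n + 1, u, v => ∃ w, E u w ∧ HasPath E n w v

/-- `u ⪯ v` : there is a directed path (possibly of length 0) from `u` to `v`. -/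
def Reach {V : Type} (E : V → V → Prop) (u v : V) : Prop := ∃ n, HasPath E n u v

/-- The distance from `u` to `v` in the digraph with edge relation `E`
(valued in `ℝ≥0∞`, equal to `⊤` if `v` is unreachable from `u`). -/
noncomputable def ddist {V : Type} (E : V → V → Prop) (u v : V) : ENNReal :=
  sInf {n : ENNReal | ∃ m : ℕ, n = (m : ENNReal) ∧ HasPath E m u v}

section PathLemmas
variable {V : Type} {E E' : V → V → Prop}

lemma hasPath_trans : ∀ {m k : ℕ} {u v w : V}, HasPath E m u v → HasPath E k v w →
    HasPath E (m + k) u w := by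
  intro m
  induction m with
  | zero => intro k u v w h1 h2; cases h1; simpa using h2
  | succ n ih =>
    rintro k u v w ⟨x, hx, hp⟩ h2
    rw [Nat.succ_add]
    exact ⟨x, hx, ih hp h2⟩

lemma hasPath_mono (h : ∀ a b, E a b → E' a b) :
    ∀ {m : ℕ} {u v : V}, HasPath E m u v → HasPath E' m u v := by
  intro m
  induction m with
  | zero => intro u v h1; exact h1
  | succ n ih => rintro u v ⟨w, hw, hp⟩; exact ⟨w, h _ _ hw, ih hp⟩

lemma hasPath_of_fn : ∀ {m : ℕ} {u v : V} (p : ℕ → V), p 0 = u → p m = v →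
    (∀ i < m, E (p i) (p (i + 1))) → HasPath E m u v := by
  intro m
  induction m with
  | zero => intro u v p h0 h1 _; exact h0 ▸ h1
  | succ n ih =>
    intro u v p h0 h1 he
    refine ⟨p 1, h0 ▸ he 0 (Nat.succ_pos n), ?_⟩
    exact ih (fun i => p (i + 1)) rfl h1 (fun i hi => he (i + 1) (by omega))

lemma fn_of_hasPath : ∀ {m : ℕ} {u v : V}, HasPath E m u v →
    ∃ p : ℕ → V, p 0 = u ∧ p m = v ∧ ∀ i < m, E (p i) (p (i + 1)) := by
  intro m
  induction m with
  | zero => intro u v h; exact ⟨fun _ => u, rfl, h ▸ rfl, by omega⟩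
  | succ n ih =>
    rintro u v ⟨w, hw, hp⟩
    obtain ⟨p, h0, h1, he⟩ := ih hp
    refine ⟨fun i => if i = 0 then u else p (i - 1), rfl, by simp [h1], ?_⟩
    intro i hi
    rcases Nat.eq_zero_or_pos i with h | h
    · subst h; simpa [h0] using hw
    · have : i ≠ 0 := by omega
      simpa [this, Nat.succ_ne_zero, show i + 1 - 1 = i - 1 + 1 by omega]
        using he (i - 1) (by omega)

lemma ddist_le {m : ℕ} {u v : V} (h : HasPath E m u v) :
    ddist E u v ≤ (m : ENNReal) :=
  sInf_le ⟨m, rfl, h⟩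

end PathLemmas

open Classical in
lemma shortest_fn {V : Type} {E : V → V → Prop} {u v : V} (h : Reach E u v) :
    ∃ p : ℕ → V, p 0 = u ∧ p (Nat.find h) = v ∧
      (∀ i < Nat.find h, E (p i) (p (i + 1))) ∧
      Set.InjOn p (Set.Iic (Nat.find h)) := by
  have hspec := Nat.find_spec h
  have hmin : ∀ m, m < Nat.find h → ¬ HasPath E m u v := fun m hm => Nat.find_min h hm
  set d := Nat.find h with hd
  clear_value d
  clear hd
  obtain ⟨p, h0, h1, he⟩ := fn_of_hasPath hspec
  refine ⟨p, h0, h1, he, ?_⟩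
  have key : ∀ i j, i < j → j ≤ d → p i ≠ p j := by
    intro i j hij hjd hpe
    have hpath : HasPath E (d - (j - i)) u v := by
      apply hasPath_of_fn (fun k => if k ≤ i then p k else p (k + (j - i)))
      · simp [h0]
      · by_cases hc : d - (j - i) ≤ i
        · have e1 : d - (j - i) = i := by omega
          have e2 : j = d := by omega
          rw [if_pos hc, e1, hpe, e2, h1]
        · simp only [if_neg hc]
          rw [show d - (j - i) + (j - i) = d by omega]
          exact h1
      · intro k hk
        by_cases hki : k ≤ i
        · by_cases hk1 : k + 1 ≤ i
          · simp only [if_pos hki, if_pos hk1]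
            exact he k (by omega)
          · have hki' : k = i := by omega
            simp only [if_pos hki, if_neg hk1]
            rw [hki', hpe, show i + 1 + (j - i) = j + 1 by omega]
            exact he j (by omega)
        · have hk1 : ¬ (k + 1 ≤ i) := by omega
          simp only [if_neg hki, if_neg hk1]
          rw [show k + 1 + (j - i) = k + (j - i) + 1 by omega]
          exact he (k + (j - i)) (by omega)
    exact hmin _ (by omega) hpath
  intro i hi j hj hpe
  simp only [Set.mem_Iic] at hi hj
  rcases lt_trichotomy i j with hlt | heq | hgt
  · exact absurd hpe (key i j hlt hj)
  · exact heq
  · exact absurd hpe.symm (key j i hgt hi)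

open Classical in
lemma hitting {V : Type} [Fintype V] (L : ℕ) (hL : 1 ≤ L) :
    ∀ (k : ℕ) (𝒜 : Finset (Finset V)), (∀ A ∈ 𝒜, L ≤ A.card) →
    (𝒜.card : ℝ) * (1 - (L : ℝ) / (Fintype.card V)) ^ k < 1 →
    ∃ S : Finset V, S.card ≤ k ∧ ∀ A ∈ 𝒜, ∃ x ∈ A, x ∈ S := by
  intro k
  induction k with
  | zero =>
    intro 𝒜 hA hbound
    simp only [pow_zero, mul_one] at hbound
    have : 𝒜.card = 0 := by exact_mod_cast Nat.lt_one_iff.mp (by exact_mod_cast hbound)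
    refine ⟨∅, le_refl _, ?_⟩
    intro A hAmem
    exact absurd hAmem (by simp [Finset.card_eq_zero.mp this])
  | succ k ih =>
    intro 𝒜 hA hbound
    rcases Finset.eq_empty_or_nonempty 𝒜 with hemp | ⟨A₀, hA₀⟩
    · exact ⟨∅, by simp, by simp [hemp]⟩
    set n := Fintype.card V with hn
    have hLn : L ≤ n := le_trans (hA A₀ hA₀) (Finset.card_le_univ A₀)
    have hn0 : 0 < n := lt_of_lt_of_le hL hLn
    have hVne : (Finset.univ : Finset V).Nonempty := by
      rwa [← Finset.card_pos, Finset.card_univ]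
    -- double counting
    have hcount : 𝒜.card * L ≤ ∑ x : V, (𝒜.filter (fun A => x ∈ A)).card := by
      have h1 : ∀ A : Finset V, A.card = ∑ x : V, if x ∈ A then 1 else 0 := by
        intro A
        rw [Finset.sum_ite_mem, Finset.univ_inter, Finset.sum_const, smul_eq_mul, mul_one]
      have h2 : ∑ x : V, (𝒜.filter (fun A => x ∈ A)).card
          = ∑ A ∈ 𝒜, A.card := by
        simp only [Finset.card_filter]
        rw [Finset.sum_comm]
        exact Finset.sum_congr rfl (fun A _ => (h1 A).symm)
      rw [h2]
      calc 𝒜.card * L = ∑ _A ∈ 𝒜, L := by rw [Finset.sum_const, smul_eq_mul]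
        _ ≤ ∑ A ∈ 𝒜, A.card := Finset.sum_le_sum hA
    -- pigeonhole
    obtain ⟨x, -, hx⟩ : ∃ x ∈ Finset.univ,
        𝒜.card * L ≤ n * (𝒜.filter (fun A => x ∈ A)).card := by
      apply Finset.exists_le_of_sum_le hVne
      calc ∑ _x : V, 𝒜.card * L = n * (𝒜.card * L) := by
            rw [Finset.sum_const, smul_eq_mul, Finset.card_univ]
        _ ≤ n * ∑ x : V, (𝒜.filter (fun A => x ∈ A)).card :=
            Nat.mul_le_mul_left n hcount
        _ = ∑ x : V, n * (𝒜.filter (fun A => x ∈ A)).card := by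
            rw [Finset.mul_sum]
    set 𝒜' := 𝒜.filter (fun A => x ∉ A) with h𝒜'
    have hsplit : (𝒜.filter (fun A => x ∈ A)).card + 𝒜'.card = 𝒜.card :=
      Finset.card_filter_add_card_filter_not (fun A => x ∈ A)
    have hfactor : (0:ℝ) ≤ 1 - (L:ℝ) / n := by
      rw [sub_nonneg, div_le_one (by exact_mod_cast hn0)]
      exact_mod_cast hLn
    have hcard' : (𝒜'.card : ℝ) ≤ 𝒜.card * (1 - (L:ℝ) / n) := by
      have h1 : (𝒜.card : ℝ) * L / n ≤ ((𝒜.filter (fun A => x ∈ A)).card : ℝ) := by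
        rw [div_le_iff₀ (by exact_mod_cast hn0)]
        calc (𝒜.card : ℝ) * L ≤ (n : ℝ) * (𝒜.filter (fun A => x ∈ A)).card := by
              exact_mod_cast hx
          _ = ((𝒜.filter (fun A => x ∈ A)).card : ℝ) * n := by ring
      have h2 : (𝒜'.card : ℝ) = 𝒜.card - (𝒜.filter (fun A => x ∈ A)).card := by
        have := hsplit; push_cast [← this]; ring
      rw [h2, mul_sub, mul_one]
      have : (𝒜.card : ℝ) * ((L:ℝ) / n) = (𝒜.card : ℝ) * L / n := by ring
      rw [this]
      linarith
    have hbound' : (𝒜'.card : ℝ) * (1 - (L : ℝ) / n) ^ k < 1 := by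
      calc (𝒜'.card : ℝ) * (1 - (L : ℝ) / n) ^ k
          ≤ (𝒜.card * (1 - (L:ℝ) / n)) * (1 - (L : ℝ) / n) ^ k :=
            mul_le_mul_of_nonneg_right hcard' (pow_nonneg hfactor k)
        _ = (𝒜.card : ℝ) * (1 - (L : ℝ) / n) ^ (k + 1) := by ring
        _ < 1 := hbound
    obtain ⟨S', hS'card, hS'⟩ := ih 𝒜'
      (fun A hAm => hA A (Finset.mem_filter.mp hAm).1) hbound'
    refine ⟨insert x S', le_trans (Finset.card_insert_le _ _) (by omega), ?_⟩
    intro A hAmem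
    by_cases hxA : x ∈ A
    · exact ⟨x, hxA, Finset.mem_insert_self x S'⟩
    · obtain ⟨y, hy1, hy2⟩ := hS' A (Finset.mem_filter.mpr ⟨hAmem, hxA⟩)
      exact ⟨y, hy1, Finset.mem_insert_of_mem hy2⟩

set_option maxHeartbeats 1000000 in
/-- There is an absolute constant `C` such that for every digraph `G` on
`n ≥ 2` vertices and every integer `1 ≤ t ≤ n` there is a set `F` of shortcut
edges with `|F| ≤ C·t²·(log n)²` such that the diameter of `G ∪ F` is at most
`C·n/t`, i.e. for all `u ⪯ v` the distance from `u` to `v` in `G ∪ F` is at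
most `C·n/t`. -/
theorem stmt_1 :
    ∃ C : ℝ, 0 < C ∧
      ∀ (V : Type) [Fintype V] (E : V → V → Prop) (t : ℕ),
        1 ≤ t → t ≤ Fintype.card V → 2 ≤ Fintype.card V →
        ∃ F : Finset (V × V),
          (∀ e ∈ F, Reach E e.1 e.2) ∧
          (F.card : ℝ) ≤ C * (t : ℝ) ^ 2 * (Real.log (Fintype.card V)) ^ 2 ∧
          ∀ u v : V, Reach E u v →
            ddist (fun a b => E a b ∨ (a, b) ∈ F) u v ≤
              ENNReal.ofReal (C * (Fintype.card V : ℝ) / (t : ℝ)) := by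
  classical
  refine ⟨100, by norm_num, ?_⟩
  intro V _ E t ht1 htn hn2
  set n := Fintype.card V with hn
  -- basic positivity
  have hn0 : 0 < n := by omega
  have ht0 : 0 < t := ht1
  have hnR : (2:ℝ) ≤ (n:ℝ) := by exact_mod_cast hn2
  have htR : (1:ℝ) ≤ (t:ℝ) := by exact_mod_cast ht1
  have htnR : (t:ℝ) ≤ (n:ℝ) := by exact_mod_cast htn
  have hlog : 0 < Real.log n := Real.log_pos (by linarith)
  -- block length L
  set L : ℕ := max 1 (n / t) with hLdef
  have hL1 : 1 ≤ L := le_max_left _ _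
  have hdiv1 : 1 ≤ n / t := (Nat.one_le_div_iff ht0).mpr htn
  have hLeq : L = n / t := max_eq_right hdiv1
  have hLn : L ≤ n := by rw [hLeq]; exact Nat.div_le_self n t
  have hn2tL : n ≤ 2 * (t * L) := by
    have h2 := Nat.div_add_mod n t
    have h3 : n % t < t := Nat.mod_lt n ht0
    have h4 : t ≤ t * (n / t) := Nat.le_mul_of_pos_right t hdiv1
    rw [hLeq]
    linarith [h2, h3, h4]
  have hLlow : (1:ℝ) / (2 * t) ≤ (L:ℝ) / n := by
    rw [div_le_div_iff₀ (by positivity) (by exact_mod_cast hn0)]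
    have : (n:ℝ) ≤ 2 * ((t:ℝ) * L) := by exact_mod_cast hn2tL
    linarith
  have hLup : (L:ℝ) ≤ (n:ℝ) / t := by
    rw [hLeq]
    exact Nat.cast_div_le
  have hfactor : (0:ℝ) ≤ 1 - (L:ℝ) / n := by
    rw [sub_nonneg, div_le_one (by exact_mod_cast hn0)]
    exact_mod_cast hLn
  -- hub budget k
  set k : ℕ := Nat.floor (6 * (t:ℝ) * Real.log n) + 1 with hkdef
  have hk_low : 6 * (t:ℝ) * Real.log n < k := by
    push_cast [hkdef]
    exact Nat.lt_floor_add_one _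
  have hk_up : (k:ℝ) ≤ 8 * t * Real.log n := by
    have h1 : (k:ℝ) ≤ 6 * (t:ℝ) * Real.log n + 1 := by
      push_cast [hkdef]
      have := Nat.floor_le (show (0:ℝ) ≤ 6 * (t:ℝ) * Real.log n by positivity)
      linarith
    have hlog2 : (0.6931471803:ℝ) < Real.log 2 := Real.log_two_gt_d9
    have hlogn2 : Real.log 2 ≤ Real.log n := Real.log_le_log (by norm_num) hnR
    nlinarith
  -- shortest paths with injective vertex functions
  have hP : ∀ pr : V × V, ∃ (d : ℕ) (p : ℕ → V),
      Reach E pr.1 pr.2 →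
        (HasPath E d pr.1 pr.2 ∧ (∀ m, HasPath E m pr.1 pr.2 → d ≤ m) ∧
         p 0 = pr.1 ∧ p d = pr.2 ∧ (∀ i < d, E (p i) (p (i + 1))) ∧
         Set.InjOn p (Set.Iic d)) := by
    intro pr
    by_cases h : Reach E pr.1 pr.2
    · obtain ⟨p, h0, h1, he, hinj⟩ := shortest_fn h
      exact ⟨Nat.find h, p, fun _ =>
        ⟨Nat.find_spec h, fun m hm => Nat.find_min' h hm, h0, h1, he, hinj⟩⟩
    · exact ⟨0, fun _ => pr.1, fun hr => absurd hr h⟩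
  choose D pa hDP using hP
  -- block families
  set P : Finset (V × V) :=
    Finset.univ.filter (fun pr : V × V => Reach E pr.1 pr.2 ∧ L ≤ D pr) with hPdef
  set Ablk : V × V → Finset V := fun pr => (Finset.Icc 1 L).image (pa pr) with hAdef
  set Bblk : V × V → Finset V :=
    fun pr => (Finset.Icc (D pr - L) (D pr - 1)).image (pa pr) with hBdef
  set 𝒜 : Finset (Finset V) := P.image Ablk ∪ P.image Bblk with h𝒜def
  have h𝒜card : 𝒜.card ≤ 2 * (n * n) := by
    calc 𝒜.card ≤ (P.image Ablk).card + (P.image Bblk).card := Finset.card_union_le _ _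
      _ ≤ P.card + P.card := add_le_add (Finset.card_image_le) (Finset.card_image_le)
      _ ≤ (Finset.univ : Finset (V × V)).card + (Finset.univ : Finset (V × V)).card :=
          add_le_add (Finset.card_filter_le _ _) (Finset.card_filter_le _ _)
      _ = 2 * (n * n) := by
          rw [Finset.card_univ, Fintype.card_prod, ← hn]; ring
  have h𝒜size : ∀ A ∈ 𝒜, L ≤ A.card := by
    intro A hA
    rw [h𝒜def, Finset.mem_union] at hA
    rcases hA with hA | hA <;> rw [Finset.mem_image] at hA <;>
      obtain ⟨pr, hpr, rfl⟩ := hA <;>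
      rw [hPdef, Finset.mem_filter] at hpr <;>
      obtain ⟨-, hreach, hLD⟩ := hpr
    · -- A-block
      obtain ⟨-, -, -, -, -, hinj⟩ := hDP pr hreach
      rw [hAdef]
      rw [Finset.card_image_of_injOn (hinj.mono ?_)]
      · rw [Nat.card_Icc]; omega
      · intro x hx
        simp only [Finset.coe_Icc, Set.mem_Icc] at hx
        exact Set.mem_Iic.mpr (by omega)
    · -- B-block
      obtain ⟨-, -, -, -, -, hinj⟩ := hDP pr hreach
      rw [hBdef]
      rw [Finset.card_image_of_injOn (hinj.mono ?_)]
      · rw [Nat.card_Icc]; omega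
      · intro x hx
        simp only [Finset.coe_Icc, Set.mem_Icc] at hx
        exact Set.mem_Iic.mpr (by omega)
  -- numeric bound for the hitting lemma
  have hnum : (𝒜.card : ℝ) * (1 - (L : ℝ) / n) ^ k < 1 := by
    have hnR0 : (0:ℝ) < (n:ℝ) := by exact_mod_cast hn0
    have h1 : (1 - (L : ℝ) / n) ^ k ≤ Real.exp (-((L:ℝ) / n)) ^ k := by
      apply pow_le_pow_left₀ hfactor
      linarith [Real.add_one_le_exp (-((L:ℝ) / n))]
    have h2 : Real.exp (-((L:ℝ) / n)) ^ k = Real.exp (-((k:ℝ) * ((L:ℝ) / n))) := by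
      rw [← Real.exp_nat_mul]
      ring_nf
    have h3 : Real.exp (-((k:ℝ) * ((L:ℝ) / n))) < Real.exp (-(3 * Real.log n)) := by
      apply Real.exp_lt_exp.mpr
      have hk0 : (0:ℝ) ≤ (k:ℝ) := Nat.cast_nonneg k
      have hstep : (k:ℝ) * ((1:ℝ) / (2 * t)) ≤ (k:ℝ) * ((L:ℝ) / n) :=
        mul_le_mul_of_nonneg_left hLlow hk0
      have ht0R : (0:ℝ) < (t:ℝ) := by linarith
      have : 3 * Real.log n < (k:ℝ) * ((1:ℝ) / (2 * t)) := by
        rw [mul_one_div, lt_div_iff₀ (by positivity)]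
        nlinarith
      linarith
    have h4 : Real.exp (-(3 * Real.log n)) = ((n:ℝ) ^ 3)⁻¹ := by
      rw [Real.exp_neg]
      congr 1
      rw [show (3:ℝ) * Real.log n = ((3:ℕ):ℝ) * Real.log n by norm_num,
        Real.exp_nat_mul, Real.exp_log hnR0]
    have h𝒜R : (𝒜.card : ℝ) ≤ 2 * (n:ℝ) ^ 2 := by
      have := h𝒜card
      have : (𝒜.card : ℝ) ≤ 2 * ((n:ℝ) * n) := by exact_mod_cast this
      nlinarith
    have hpow_nonneg : (0:ℝ) ≤ (1 - (L : ℝ) / n) ^ k := pow_nonneg hfactor k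
    calc (𝒜.card : ℝ) * (1 - (L : ℝ) / n) ^ k
        ≤ 2 * (n:ℝ) ^ 2 * (1 - (L : ℝ) / n) ^ k :=
          mul_le_mul_of_nonneg_right h𝒜R hpow_nonneg
      _ ≤ 2 * (n:ℝ) ^ 2 * Real.exp (-((k:ℝ) * ((L:ℝ) / n))) := by
          rw [← h2]
          exact mul_le_mul_of_nonneg_left h1 (by positivity)
      _ < 2 * (n:ℝ) ^ 2 * Real.exp (-(3 * Real.log n)) :=
          mul_lt_mul_of_pos_left h3 (by positivity)
      _ = 2 * (n:ℝ) ^ 2 / (n:ℝ) ^ 3 := by rw [h4]; ring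
      _ ≤ 1 := by
          rw [div_le_one (by positivity)]
          nlinarith
  obtain ⟨S, hScard, hShits⟩ := hitting L hL1 k 𝒜 h𝒜size hnum
  set Fs : Finset (V × V) := (S ×ˢ S).filter (fun e => Reach E e.1 e.2) with hFsdef
  refine ⟨Fs, ?_, ?_, ?_⟩
  · intro e he
    exact (Finset.mem_filter.mp he).2
  · -- cardinality of F
    have h1 : Fs.card ≤ k * k := by
      calc Fs.card ≤ (S ×ˢ S).card := Finset.card_filter_le _ _
        _ = S.card * S.card := Finset.card_product S S
        _ ≤ k * k := Nat.mul_le_mul hScard hScard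
    have h2 : (Fs.card : ℝ) ≤ (k:ℝ) * k := by exact_mod_cast h1
    have hk0 : (0:ℝ) ≤ (k:ℝ) := Nat.cast_nonneg k
    nlinarith [hk_up, hlog, htR]
  · -- diameter bound
    intro u v hr
    have hmono : ∀ (a b : V), E a b → (E a b ∨ (a, b) ∈ Fs) := fun a b h => Or.inl h
    have hpre : ∀ (pr : V × V) (hr : Reach E pr.1 pr.2) (i : ℕ), i ≤ D pr →
        HasPath E i pr.1 (pa pr i) := by
      intro pr hr i hi
      obtain ⟨-, -, h0, -, he, -⟩ := hDP pr hr
      exact hasPath_of_fn (pa pr) h0 rfl (fun j hj => he j (by omega))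
    have hsuf : ∀ (pr : V × V) (hr : Reach E pr.1 pr.2) (i : ℕ), i ≤ D pr →
        HasPath E (D pr - i) (pa pr i) pr.2 := by
      intro pr hr i hi
      obtain ⟨-, -, -, h1, he, -⟩ := hDP pr hr
      refine hasPath_of_fn (fun j => pa pr (i + j)) rfl ?_ ?_
      · show pa pr (i + (D pr - i)) = pr.2
        rw [show i + (D pr - i) = D pr by omega]
        exact h1
      · intro j hj
        show E (pa pr (i + j)) (pa pr (i + (j + 1)))
        rw [show i + (j + 1) = i + j + 1 by ring]
        exact he (i + j) (by omega)
    have key : ∃ m, m ≤ 2 * L + 1 ∧ HasPath (fun a b => E a b ∨ (a, b) ∈ Fs) m u v := by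
      by_cases hc1 : L ≤ D (u, v)
      · have hPmem : (u, v) ∈ P :=
          Finset.mem_filter.mpr ⟨Finset.mem_univ _, hr, hc1⟩
        have hAmem : Ablk (u, v) ∈ 𝒜 :=
          Finset.mem_union_left _ (Finset.mem_image_of_mem _ hPmem)
        obtain ⟨a, ha, haS⟩ := hShits _ hAmem
        obtain ⟨i, hi, rfl⟩ := Finset.mem_image.mp ha
        simp only [Finset.mem_Icc] at hi
        have hp1 : HasPath E i u (pa (u, v) i) := hpre (u, v) hr i (by omega)
        have hp2 : HasPath E (D (u, v) - i) (pa (u, v) i) v := hsuf (u, v) hr i (by omega)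
        have hrav : Reach E (pa (u, v) i) v := ⟨_, hp2⟩
        by_cases hc2 : L ≤ D (pa (u, v) i, v)
        · have hPmem2 : (pa (u, v) i, v) ∈ P :=
            Finset.mem_filter.mpr ⟨Finset.mem_univ _, hrav, hc2⟩
          have hBmem : Bblk (pa (u, v) i, v) ∈ 𝒜 :=
            Finset.mem_union_right _ (Finset.mem_image_of_mem _ hPmem2)
          obtain ⟨b, hb, hbS⟩ := hShits _ hBmem
          obtain ⟨j, hj, rfl⟩ := Finset.mem_image.mp hb
          simp only [Finset.mem_Icc] at hj
          have hq1 : HasPath E j (pa (u, v) i) (pa (pa (u, v) i, v) j) :=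
            hpre (pa (u, v) i, v) hrav j (by omega)
          have hq2 : HasPath E (D (pa (u, v) i, v) - j) (pa (pa (u, v) i, v) j) v :=
            hsuf (pa (u, v) i, v) hrav j (by omega)
          have hFab : (pa (u, v) i, pa (pa (u, v) i, v) j) ∈ Fs :=
            Finset.mem_filter.mpr ⟨Finset.mem_product.mpr ⟨haS, hbS⟩, ⟨j, hq1⟩⟩
          have hedge : HasPath (fun a b => E a b ∨ (a, b) ∈ Fs) 1
              (pa (u, v) i) (pa (pa (u, v) i, v) j) :=
            ⟨_, Or.inr hFab, rfl⟩
          refine ⟨i + (1 + (D (pa (u, v) i, v) - j)), by omega, ?_⟩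
          exact hasPath_trans (hasPath_mono hmono hp1)
            (hasPath_trans hedge (hasPath_mono hmono hq2))
        · obtain ⟨hpath2, -, -, -, -, -⟩ := hDP (pa (u, v) i, v) hrav
          exact ⟨i + D (pa (u, v) i, v), by omega,
            hasPath_trans (hasPath_mono hmono hp1) (hasPath_mono hmono hpath2)⟩
      · obtain ⟨hpath, -, -, -, -, -⟩ := hDP (u, v) hr
        exact ⟨D (u, v), by omega, hasPath_mono hmono hpath⟩
    obtain ⟨m, hm, hpath⟩ := key
    calc ddist (fun a b => E a b ∨ (a, b) ∈ Fs) u v ≤ (m : ENNReal) := ddist_le hpath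
      _ ≤ ENNReal.ofReal (100 * (n:ℝ) / t) := by
          rw [← ENNReal.ofReal_natCast m]
          apply ENNReal.ofReal_le_ofReal
          have h1 : (m:ℝ) ≤ 2 * (L:ℝ) + 1 := by exact_mod_cast hm
          have h2 : (1:ℝ) ≤ (n:ℝ) / t := by
            rw [le_div_iff₀ (by linarith)]
            linarith
          have h3 : (0:ℝ) < (t:ℝ) := by linarith
          have h4 : 2 * (L:ℝ) + 1 ≤ 3 * ((n:ℝ) / t) := by linarith [hLup]
          have h5 : 3 * ((n:ℝ) / t) ≤ 100 * (n:ℝ) / t := by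
            rw [mul_div_assoc]
            nlinarith
          linarith
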